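/- Define f(x,K) = ((x+1)·log(x+K)) / ((x+K)·(log(x+K) − log K)) for x ≥ 0 and a positive integer K ≥ 1 (with f interpreted via its limit when needed). Then for each fixed positive integer K, f(x,K) is monotonically decreasing in x on (0, ∞). -/

import Mathlib

lemma pade {t : ℝ} (ht : 1 ≤ t) : 2*(t-1)/(t+1) ≤ Real.log t := by
  have key : MonotoneOn (fun s : ℝ => Real.log s - 2*(s-1)/(s+1)) (Set.Ici 1) := by
    have hder : ∀ s ∈ interior (Set.Ici (1:ℝ)),
        HasDerivAt (fun s : ℝ => Real.log s - 2*(s-1)/(s+1))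
          (1/s - 4/(s+1)^2) s := by
      intro s hs
      rw [interior_Ici] at hs
      have hs1 : (1:ℝ) < s := hs
      have hs0 : s ≠ 0 := by linarith
      have hsp : s + 1 ≠ 0 := by linarith
      have h1 : HasDerivAt Real.log (1/s) s := by
        simpa [one_div] using Real.hasDerivAt_log hs0
      have h2 : HasDerivAt (fun s : ℝ => 2*(s-1)/(s+1))
          ((2*1*(s+1) - 2*(s-1)*1)/(s+1)^2) s := by
        exact (((hasDerivAt_id s).sub_const 1).const_mul 2).div
          ((hasDerivAt_id s).add_const 1) hsp
      have h2' : HasDerivAt (fun s : ℝ => 2*(s-1)/(s+1)) (4/(s+1)^2) s := by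
        convert h2 using 1; field_simp; ring
      exact h1.sub h2'
    apply monotoneOn_of_deriv_nonneg (convex_Ici 1)
    · apply ContinuousOn.sub
      · exact fun s hs => (Real.continuousAt_log (by simp at hs; linarith)).continuousWithinAt
      · apply ContinuousOn.div
        · fun_prop
        · fun_prop
        · intro s hs; simp at hs; intro h; linarith
    · intro s hs
      exact (hder s hs).differentiableAt.differentiableWithinAt
    · intro s hs
      rw [(hder s hs).deriv]
      rw [interior_Ici] at hs
      have hs1 : (1:ℝ) < s := hs
      have h1 : (0:ℝ) < s := by linarith
      have h2 : (0:ℝ) < (s+1)^2 := by positivity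
      rw [sub_nonneg, div_le_div_iff₀ h2 h1]
      nlinarith [sq_nonneg (s-1)]
  have h0 : (1:ℝ) ∈ Set.Ici (1:ℝ) := Set.self_mem_Ici
  have := key h0 ht ht
  simp at this
  linarith


lemma log_bnd {t : ℝ} (ht : 1 ≤ t) : 2*Real.log t ≤ t - 1/t := by
  have key : MonotoneOn (fun s : ℝ => s - 1/s - 2*Real.log s) (Set.Ici 1) := by
    have hder : ∀ s ∈ interior (Set.Ici (1:ℝ)),
        HasDerivAt (fun s : ℝ => s - 1/s - 2*Real.log s) (1 + 1/s^2 - 2*(1/s)) s := by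
      intro s hs
      rw [interior_Ici] at hs
      have hs0 : s ≠ 0 := by intro h; rw [h] at hs; exact absurd hs (by norm_num)
      have h1 : HasDerivAt (fun s : ℝ => 1/s) (-(1/s^2)) s := by
        simpa [one_div] using (hasDerivAt_inv hs0)
      have h2 : HasDerivAt Real.log (1/s) s := by
        simpa [one_div] using Real.hasDerivAt_log hs0
      have := ((hasDerivAt_id s).sub h1).sub (h2.const_mul 2)
      exact this.congr_deriv (by ring)
    apply monotoneOn_of_deriv_nonneg (convex_Ici 1)
    · apply ContinuousOn.sub
      · apply ContinuousOn.sub continuousOn_id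
        apply ContinuousOn.div continuousOn_const continuousOn_id
        intro s hs; simp at hs ⊢; linarith
      · exact fun s hs => (ContinuousAt.continuousWithinAt
          ((continuousAt_const.mul (Real.continuousAt_log (by simp at hs; linarith)))))
    · intro s hs
      exact (hder s hs).differentiableAt.differentiableWithinAt
    · intro s hs
      rw [(hder s hs).deriv]
      rw [interior_Ici] at hs
      have hs1 : (1:ℝ) < s := hs
      have h2 : (0:ℝ) < s^2 := by positivity
      have hex : 1 + 1/s^2 - 2*(1/s) = (s-1)^2/s^2 := by field_simp; ring
      rw [hex]; positivity
  have := key Set.self_mem_Ici ht ht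
  simp only [one_div] at this ⊢
  simp at this
  linarith




lemma key (Kr : ℝ) (hK1 : 1 ≤ Kr) {x : ℝ} (hx : 0 < x) :
    (Kr-1) * Real.log (x+Kr) * (Real.log (x+Kr) - Real.log Kr) ≤ (x+1) * Real.log Kr := by
  have hKpos : 0 < Kr := by linarith
  have hxK : 0 < x + Kr := by linarith
  set u := Real.sqrt (x + Kr) with hu_def
  set v := Real.sqrt Kr with hv_def
  have hu : 0 < u := Real.sqrt_pos.mpr hxK
  have hv : 0 < v := Real.sqrt_pos.mpr hKpos
  have hu2 : u^2 = x + Kr := Real.sq_sqrt hxK.le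
  have hv2 : v^2 = Kr := Real.sq_sqrt hKpos.le
  have hL : Real.log (x+Kr) = 2 * Real.log u := by
    rw [← hu2, Real.log_pow]; push_cast; ring
  have hc : Real.log Kr = 2 * Real.log v := by
    rw [← hv2, Real.log_pow]; push_cast; ring
  set c := Real.log Kr with hcdef
  set L := Real.log (x+Kr) with hLdef
  set w := x/(u*v) with hwdef
  have hD0 : 0 ≤ L - c := by
    rw [sub_nonneg]
    exact Real.log_le_log hKpos (by linarith)
  have hc0 : 0 ≤ c := Real.log_nonneg hK1
  have hDw : L - c ≤ w := by
    have huv : v ≤ u := Real.sqrt_le_sqrt (by linarith)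
    have hs1 : 1 ≤ u/v := (one_le_div hv).mpr huv
    have h1 : 2*Real.log (u/v) ≤ u/v - 1/(u/v) := log_bnd hs1
    have hlog : Real.log (u/v) = Real.log u - Real.log v := Real.log_div hu.ne' hv.ne'
    have hinv : 1/(u/v) = v/u := by field_simp
    have h3 : u/v - v/u = w := by
      rw [hwdef, show x = u^2 - v^2 by rw [hu2, hv2]; ring]
      field_simp
    calc L - c = 2*(Real.log u - Real.log v) := by rw [hL, hc]; ring
      _ = 2*Real.log (u/v) := by rw [hlog]
      _ ≤ u/v - 1/(u/v) := h1
      _ = u/v - v/u := by rw [hinv]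
      _ = w := h3
  have hw0 : 0 ≤ w := le_trans hD0 hDw
  have hw2 : w^2 = x^2/(Kr*(x+Kr)) := by
    rw [hwdef, div_pow, mul_pow, hu2, hv2, mul_comm]
  have hwle : w ≤ x/(2*Kr) + x/(2*(x+Kr)) := by
    have hex : x/(2*Kr) + x/(2*(x+Kr)) - w = x*(u-v)^2/(2*u^2*v^2) := by
      rw [hwdef, ← hu2, ← hv2]
      field_simp; ring
    have hnn : (0:ℝ) ≤ x*(u-v)^2/(2*u^2*v^2) := by positivity
    linarith
  have hpade' : 2*(Kr-1) ≤ c*(Kr+1) := by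
    have hpade : 2*(Kr-1)/(Kr+1) ≤ c := pade hK1
    rw [div_le_iff₀ (by linarith : (0:ℝ) < Kr+1)] at hpade; linarith
  have hK0 : 0 ≤ Kr - 1 := by linarith
  have step1 : (Kr-1) * L * (L - c) ≤ (Kr-1)*c*w + (Kr-1)*w^2 := by
    have hLcw : L ≤ c + w := by linarith
    have hL0 : 0 ≤ L := by linarith
    nlinarith [mul_le_mul hLcw hDw hD0 (by linarith : 0 ≤ c + w)]
  have step2 : (Kr-1)*c*w + (Kr-1)*w^2 ≤ (x+1)*c := by
    have h1 : (Kr-1)*c*w ≤ (Kr-1)*c*(x/(2*Kr) + x/(2*(x+Kr))) :=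
      mul_le_mul_of_nonneg_left hwle (by positivity)
    have hP : 0 ≤ 2*c*Kr*(x+1)*(x+Kr) - (Kr-1)*c*x*(x+Kr) - (Kr-1)*c*Kr*x - 2*(Kr-1)*x^2 := by
      nlinarith [mul_nonneg (by linarith : (0:ℝ) ≤ c*(Kr+1) - 2*(Kr-1)) (sq_nonneg x),
        mul_nonneg hc0 hx.le, mul_nonneg hc0 (sq_nonneg Kr),
        mul_nonneg (mul_nonneg hc0 hx.le) hKpos.le]
    have hex2 : (x+1)*c - ((Kr-1)*c*(x/(2*Kr) + x/(2*(x+Kr))) + (Kr-1)*(x^2/(Kr*(x+Kr))))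
        = (2*c*Kr*(x+1)*(x+Kr) - (Kr-1)*c*x*(x+Kr) - (Kr-1)*c*Kr*x - 2*(Kr-1)*x^2)
          / (2*Kr*(x+Kr)) := by
      field_simp; ring
    have hdiv : 0 ≤ (2*c*Kr*(x+1)*(x+Kr) - (Kr-1)*c*x*(x+Kr) - (Kr-1)*c*Kr*x - 2*(Kr-1)*x^2)
          / (2*Kr*(x+Kr)) := div_nonneg hP (by positivity)
    have hfin : (Kr-1)*(x^2/(Kr*(x+Kr))) = (Kr-1)*w^2 := by rw [hw2]
    linarith [h1, hdiv, hex2, hfin.symm.le, hfin.le]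
  linarith



theorem stmt2 (K : ℕ) (hK : 1 ≤ K) :
    AntitoneOn (fun x : ℝ =>
      ((x + 1) * Real.log (x + K)) / ((x + K) * (Real.log (x + K) - Real.log K)))
      (Set.Ioi 0) := by
  have hK1 : (1:ℝ) ≤ (K:ℝ) := by exact_mod_cast hK
  set Kr := (K:ℝ) with hKr
  have hfacts : ∀ x : ℝ, x ∈ interior (Set.Ioi (0:ℝ)) →
      0 < x + Kr ∧ 0 < Real.log (x + Kr) - Real.log Kr := by
    intro x hx
    rw [interior_Ioi] at hx
    have hx0 : (0:ℝ) < x := hx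
    refine ⟨by linarith, ?_⟩
    rw [sub_pos]
    exact Real.log_lt_log (by linarith) (by linarith)
  have hder : ∀ x ∈ interior (Set.Ioi (0:ℝ)),
      HasDerivAt (fun x : ℝ =>
          ((x + 1) * Real.log (x + Kr)) / ((x + Kr) * (Real.log (x + Kr) - Real.log Kr)))
        (((1 * Real.log (x + Kr) + (x+1) * (1/(x+Kr))) * ((x + Kr) * (Real.log (x + Kr) - Real.log Kr))
          - (x + 1) * Real.log (x + Kr) * (1 * (Real.log (x + Kr) - Real.log Kr) + (x+Kr) * (1/(x+Kr))))
          / ((x + Kr) * (Real.log (x + Kr) - Real.log Kr))^2) x := by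
    intro x hx
    obtain ⟨hxK, hLc⟩ := hfacts x hx
    have hDne : (x + Kr) * (Real.log (x + Kr) - Real.log Kr) ≠ 0 := by positivity
    have h1 : HasDerivAt (fun y : ℝ => y + Kr) 1 x := (hasDerivAt_id x).add_const Kr
    have hlog : HasDerivAt (fun y : ℝ => Real.log (y + Kr)) (1/(x+Kr)) x := by
      simpa using h1.log hxK.ne'
    have hN : HasDerivAt (fun y : ℝ => (y + 1) * Real.log (y + Kr))
        (1 * Real.log (x + Kr) + (x+1) * (1/(x+Kr))) x :=
      ((hasDerivAt_id x).add_const 1).mul hlog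
    have hD : HasDerivAt (fun y : ℝ => (y + Kr) * (Real.log (y + Kr) - Real.log Kr))
        (1 * (Real.log (x + Kr) - Real.log Kr) + (x+Kr) * (1/(x+Kr))) x :=
      h1.mul (hlog.sub_const _)
    exact hN.div hD hDne
  apply antitoneOn_of_deriv_nonpos (convex_Ioi 0)
  · intro x hx
    have hx' : x ∈ interior (Set.Ioi (0:ℝ)) := by rwa [interior_Ioi]
    exact (hder x hx').differentiableAt.continuousAt.continuousWithinAt
  · intro x hx
    exact (hder x hx).differentiableAt.differentiableWithinAt
  · intro x hx
    rw [(hder x hx).deriv]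
    obtain ⟨hxK, hLc⟩ := hfacts x hx
    rw [interior_Ioi] at hx
    have hx0 : (0:ℝ) < x := hx
    apply div_nonpos_of_nonpos_of_nonneg _ (sq_nonneg _)
    have hkey := key Kr hK1 hx0
    have hex : (1 * Real.log (x + Kr) + (x+1) * (1/(x+Kr))) * ((x + Kr) * (Real.log (x + Kr) - Real.log Kr))
          - (x + 1) * Real.log (x + Kr) * (1 * (Real.log (x + Kr) - Real.log Kr) + (x+Kr) * (1/(x+Kr)))
        = (Kr-1) * Real.log (x+Kr) * (Real.log (x+Kr) - Real.log Kr) - (x+1) * Real.log Kr := by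
      field_simp
      ring
    rw [hex]
    linarith
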